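/- Conversely, if D± = P⁻¹(Q± + B/2) are degree-d USBP operators with Q₊ + Q₊ᵀ = S, then D = (D₊ + D₋)/2 is a degree-d SBP operator and S𝐟 = 0 for all polynomials f of degree ≤ d. -/
import Mathlib


open Matrix Polynomial

/-- USBP operators yield an SBP operator D = (Dp+Dm)/2 and the
dissipation matrix S annihilates nodal values of polynomials of degree ≤ d. -/
theorem usbp_gives_sbp_and_annihilation {N d : ℕ} (x : Fin N → ℝ)
    (hx : Function.Injective x)
    (P Qp Qm B S Dp Dm : Matrix (Fin N) (Fin N) ℝ)
    (hP : P.PosDef)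
    (hQ : Qp + Qmᵀ = 0)
    (hS : Qp + Qpᵀ = S) (hSsym : Sᵀ = S) (hSneg : (-S).PosSemidef)
    (hDp : Dp = P⁻¹ * (Qp + (1/2 : ℝ) • B))
    (hDm : Dm = P⁻¹ * (Qm + (1/2 : ℝ) • B))
    (hexactp : ∀ p : Polynomial ℝ, p.degree ≤ d →
      Dp.mulVec (fun i => p.eval (x i)) = fun i => (p.derivative).eval (x i))
    (hexactm : ∀ p : Polynomial ℝ, p.degree ≤ d →
      Dm.mulVec (fun i => p.eval (x i)) = fun i => (p.derivative).eval (x i)) :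
    ((1/2 : ℝ) • (Dp + Dm) = P⁻¹ * ((1/2 : ℝ) • (Qp + Qm) + (1/2 : ℝ) • B)) ∧
    (∀ p : Polynomial ℝ, p.degree ≤ d →
      ((1/2 : ℝ) • (Dp + Dm)).mulVec (fun i => p.eval (x i)) =
        fun i => (p.derivative).eval (x i)) ∧
    ((1/2 : ℝ) • (Qp + Qm) + ((1/2 : ℝ) • (Qp + Qm))ᵀ = 0) ∧
    (∀ p : Polynomial ℝ, p.degree ≤ d →
      S.mulVec (fun i => p.eval (x i)) = 0) := by
  have hQm : Qm = -Qpᵀ := by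
    have := congrArg Matrix.transpose hQ
    simp [Matrix.transpose_add] at this
    linear_combination (norm := module) this
  refine ⟨?_, ?_, ?_, ?_⟩
  · subst hDp hDm
    have key : (1/2 : ℝ) • (Qp + (1/2 : ℝ) • B + (Qm + (1/2 : ℝ) • B)) =
        (1/2 : ℝ) • (Qp + Qm) + (1/2 : ℝ) • B := by module
    rw [← Matrix.mul_add, ← key, Matrix.mul_smul]
  · intro p hp
    rw [Matrix.smul_mulVec, Matrix.add_mulVec, hexactp p hp, hexactm p hp]
    funext i
    simp [Pi.add_apply]
    ring
  · rw [Matrix.transpose_smul, Matrix.transpose_add, hQm]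
    simp only [Matrix.transpose_neg, Matrix.transpose_transpose]
    module
  · intro p hp
    have hPinv : P * P⁻¹ = 1 :=
      Matrix.mul_nonsing_inv _ (isUnit_iff_ne_zero.mpr hP.det_pos.ne')
    have hdiff : P⁻¹ * S = Dp - Dm := by
      rw [hDp, hDm, ← Matrix.mul_sub, ← hS, hQm]
      congr 1
      module
    have h0 : (P⁻¹ * S).mulVec (fun i => p.eval (x i)) = 0 := by
      rw [hdiff, Matrix.sub_mulVec, hexactp p hp, hexactm p hp, sub_self]
    calc S.mulVec (fun i => p.eval (x i))
        = (P * (P⁻¹ * S)).mulVec (fun i => p.eval (x i)) := by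
          rw [← Matrix.mul_assoc, hPinv, Matrix.one_mul]
      _ = P.mulVec ((P⁻¹ * S).mulVec (fun i => p.eval (x i))) := by
          rw [Matrix.mulVec_mulVec]
      _ = 0 := by rw [h0, Matrix.mulVec_zero]
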